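/- In the deterministic doubling-timer network, if the input x fires in round t₀, then for each layer i ≥ 1 the second counting neuron a_{i,2} fires exactly in rounds t₀ + ℓ·2^i + i − 1 for ℓ = 1, …, ⌊t̂/2^i⌋. In particular, the top-layer neuron a_{log t̂, 2} fires for the first time in round t₀ + t̂ + log t̂ − 1. -/

import Mathlib

/-- indicator of a boolean, as an integer (used for membrane potentials) -/
def b2z (x : Bool) : ℤ := if x then 1 else 0

lemma mul_sandwich {p a b : ℕ} (hp : 2 ≤ p) (h1 : a*p + 1 ≤ b*p) (h2 : b*p ≤ (a+1)*p + 1) :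
    b = a + 1 := by
  have hb1 : a < b := by
    by_contra h
    push_neg at h
    have := Nat.mul_le_mul_right p h
    linarith
  have hb2 : b < a + 2 := by
    by_contra h
    push_neg at h
    have := Nat.mul_le_mul_right p h
    linarith
  omega

/-- in the deterministic doubling-timer network with `m = log t̂` layers
(`t̂ = 2^m`), if the input `x` fires (only) in round `t₀`, each layer-`i` neuron `a_{i,2}`
fires in rounds `t₀ + ℓ·2^i + i - 1` for `ℓ = 1,…,⌊t̂/2^i⌋`; in particular the top neuron
`a_{m,2}` fires for the first time in round `t₀ + t̂ + m - 1`. -/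
theorem det_timer_layer_firing
    (m t₀ : ℕ) (hm : 1 ≤ m)
    (x : ℕ → Bool) (a1 a2 d : ℕ → ℕ → Bool)
    (hx : ∀ τ, x τ = decide (τ = t₀))
    (hquiet : ∀ i τ, τ ≤ t₀ → a1 i τ = false ∧ a2 i τ = false ∧ d i τ = false)
    (ha11 : ∀ τ, a1 1 (τ + 1) =
      decide ((1 : ℤ) ≤ 3 * b2z (x τ) + b2z (a2 1 τ) - 2 * b2z (a2 m τ)))
    (ha12 : ∀ τ, a2 1 (τ + 1) =
      decide ((1 : ℤ) ≤ b2z (a1 1 τ) - 2 * b2z (a2 m τ)))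
    (ha1 : ∀ i τ, 2 ≤ i → i ≤ m → a1 i (τ + 1) =
      decide ((1 : ℤ) ≤ b2z (a2 (i - 1) τ) + b2z (a1 i τ) - b2z (d i τ)
        - 2 * b2z (a2 m τ)))
    (ha2 : ∀ i τ, 2 ≤ i → i ≤ m → a2 i (τ + 1) =
      decide ((2 : ℤ) ≤ b2z (a2 (i - 1) τ) + b2z (a1 i τ) - 2 * b2z (a2 m τ)))
    (hd : ∀ i τ, 2 ≤ i → i ≤ m → d i (τ + 1) =
      decide ((2 : ℤ) ≤ b2z (a2 (i - 1) τ) + b2z (a1 i τ))) :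
    (∀ i ℓ : ℕ, 1 ≤ i → i ≤ m → 1 ≤ ℓ → ℓ ≤ 2 ^ m / 2 ^ i →
        a2 i (t₀ + ℓ * 2 ^ i + i - 1) = true) ∧
    (∀ τ, τ < t₀ + 2 ^ m + m - 1 → a2 m τ = false) ∧
    a2 m (t₀ + 2 ^ m + m - 1) = true := by
  obtain ⟨M, rfl⟩ : ∃ M, m = M + 1 := ⟨m - 1, by omega⟩
  have hp2 : ∀ j : ℕ, (2:ℕ) ≤ 2^(j+1) := fun j => by
    calc (2:ℕ) = 2^1 := rfl
    _ ≤ 2^(j+1) := Nat.pow_le_pow_right (by norm_num) (by omega)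
  have key : ∀ n, n ≤ 2^(M+1) + M →
      (∀ j, j ≤ M → (a2 (j+1) (t₀+n) = true ↔ ∃ ℓ, 1 ≤ ℓ ∧ n = ℓ * 2^(j+1) + j)) ∧
      (a1 1 (t₀+n) = true ↔ ∃ k, n = 2*k + 1) ∧
      (∀ j, j + 1 ≤ M →
        (a1 (j+2) (t₀+n) = true ↔
          ∃ k, (2*k+1) * 2^(j+1) + (j+1) ≤ n ∧ n ≤ (2*k+2) * 2^(j+1) + (j+1)) ∧
        (d (j+2) (t₀+n) = true ↔ ∃ ℓ, 1 ≤ ℓ ∧ n = ℓ * (2 * 2^(j+1)) + (j+1))) := by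
    intro n
    induction n with
    | zero =>
      intro _
      refine ⟨fun j hj => ?_, ?_, fun j hj => ⟨?_, ?_⟩⟩
      · rw [(hquiet (j+1) (t₀+0) (by omega)).2.1]
        simp only [Bool.false_eq_true, false_iff]
        rintro ⟨ℓ, hℓ, he⟩
        have := Nat.le_mul_of_pos_left (2^(j+1)) hℓ
        have := hp2 j
        linarith
      · rw [(hquiet 1 (t₀+0) (by omega)).1]
        simp only [Bool.false_eq_true, false_iff]
        rintro ⟨k, hk⟩
        omega
      · rw [(hquiet (j+2) (t₀+0) (by omega)).1]
        simp only [Bool.false_eq_true, false_iff]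
        rintro ⟨k, h1, h2⟩
        have := Nat.le_mul_of_pos_left (2^(j+1)) (show 0 < 2*k+1 by omega)
        have := hp2 j
        linarith
      · rw [(hquiet (j+2) (t₀+0) (by omega)).2.2]
        simp only [Bool.false_eq_true, false_iff]
        rintro ⟨ℓ, hℓ, he⟩
        have := Nat.le_mul_of_pos_left (2*2^(j+1)) hℓ
        have := hp2 j
        linarith
    | succ n ih =>
      intro hn
      obtain ⟨IH2, IH1, IHad⟩ := ih (by omega)
      have hm0 : a2 (M+1) (t₀+n) = false := by
        cases hval : a2 (M+1) (t₀+n) with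
        | false => rfl
        | true =>
          obtain ⟨ℓ, hℓ, heq⟩ := (IH2 M (by omega)).mp hval
          have h1 : 2^(M+1) ≤ ℓ * 2^(M+1) := Nat.le_mul_of_pos_left _ hℓ
          have h2 : 2^(M+1) + M ≤ n := by linarith
          linarith
      have hstep : t₀ + (n+1) = (t₀ + n) + 1 := rfl
      refine ⟨fun j hj => ?_, ?_, fun j hj => ⟨?_, ?_⟩⟩
      · -- first component : a2 layers
        match j, hj with
        | 0, _ =>
          have HB := IH1
          cases hA : a1 1 (t₀+n) with
          | false =>
            rw [hA] at HB
            simp only [Bool.false_eq_true, false_iff] at HB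
            have hval : a2 1 (t₀+(n+1)) = false := by
              rw [hstep, ha12 (t₀+n), hm0, hA]; norm_num [b2z]
            rw [hval]
            simp only [Bool.false_eq_true, false_iff]
            rintro ⟨ℓ, hℓ, he⟩
            norm_num at he
            exact HB ⟨ℓ-1, by omega⟩
          | true =>
            rw [hA] at HB
            simp only [true_iff] at HB
            obtain ⟨k, hk⟩ := HB
            have hval : a2 1 (t₀+(n+1)) = true := by
              rw [hstep, ha12 (t₀+n), hm0, hA]; norm_num [b2z]
            rw [hval]
            simp only [true_iff]
            exact ⟨k+1, by omega, by norm_num; omega⟩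
        | (j+1), hj =>
          rw [show j+1+1 = j+2 from rfl]
          have epow : (2:ℕ)^(j+2) = 2 * 2^(j+1) := by ring
          rw [epow]
          have hp := hp2 j
          have HB := IH2 j (by omega)
          have HA := (IHad j (by omega)).1
          cases hB : a2 (j+1) (t₀+n) with
          | false =>
            rw [hB] at HB
            simp only [Bool.false_eq_true, false_iff] at HB
            have hval : a2 (j+2) (t₀+(n+1)) = false := by
              rw [hstep, ha2 (j+2) (t₀+n) (by omega) (by omega),
                show j+2-1 = j+1 from rfl, hm0, hB]
              cases a1 (j+2) (t₀+n) <;> norm_num [b2z]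
            rw [hval]
            simp only [Bool.false_eq_true, false_iff]
            rintro ⟨ℓ, hℓ, he⟩
            obtain ⟨k, rfl⟩ : ∃ k, ℓ = k + 1 := ⟨ℓ-1, by omega⟩
            exact HB ⟨2*(k+1), by omega, by linarith⟩
          | true =>
            rw [hB] at HB
            simp only [true_iff] at HB
            obtain ⟨ℓ, hℓ, hBe⟩ := HB
            cases hA : a1 (j+2) (t₀+n) with
            | false =>
              rw [hA] at HA
              simp only [Bool.false_eq_true, false_iff] at HA
              have hval : a2 (j+2) (t₀+(n+1)) = false := by
                rw [hstep, ha2 (j+2) (t₀+n) (by omega) (by omega),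
                  show j+2-1 = j+1 from rfl, hm0, hB, hA]
                norm_num [b2z]
              rw [hval]
              simp only [Bool.false_eq_true, false_iff]
              rintro ⟨ℓ', hℓ', he⟩
              obtain ⟨k, rfl⟩ : ∃ k, ℓ' = k + 1 := ⟨ℓ'-1, by omega⟩
              exact HA ⟨k, by linarith, by linarith⟩
            | true =>
              rw [hA] at HA
              simp only [true_iff] at HA
              obtain ⟨k, hk1, hk2⟩ := HA
              have hs : ℓ = (2*k+1) + 1 :=
                mul_sandwich hp (by linarith) (by linarith)
              have hval : a2 (j+2) (t₀+(n+1)) = true := by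
                rw [hstep, ha2 (j+2) (t₀+n) (by omega) (by omega),
                  show j+2-1 = j+1 from rfl, hm0, hB, hA]
                norm_num [b2z]
              rw [hval]
              simp only [true_iff]
              refine ⟨k+1, by omega, by rw [hBe, hs]; ring⟩
      · -- second component : a1 of layer 1
        by_cases ht : t₀ + n = t₀
        · have hn0 : n = 0 := by omega
          have hxv : x (t₀+n) = true := by rw [hx]; simp [ht]
          have hval : a1 1 (t₀+(n+1)) = true := by
            rw [hstep, ha11 (t₀+n), hm0, hxv, (hquiet 1 (t₀+n) (by omega)).2.1]
            norm_num [b2z]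
          rw [hval]
          simp only [true_iff]
          exact ⟨0, by omega⟩
        · have hxv : x (t₀+n) = false := by rw [hx]; simp [ht]; omega
          have HB := IH2 0 (by omega)
          cases hB : a2 1 (t₀+n) with
          | false =>
            rw [hB] at HB
            simp only [Bool.false_eq_true, false_iff] at HB
            have hval : a1 1 (t₀+(n+1)) = false := by
              rw [hstep, ha11 (t₀+n), hm0, hxv, hB]; norm_num [b2z]
            rw [hval]
            simp only [Bool.false_eq_true, false_iff]
            rintro ⟨k, hk⟩
            refine HB ⟨k, by omega, by norm_num; omega⟩
          | true =>
            rw [hB] at HB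
            simp only [true_iff] at HB
            obtain ⟨ℓ, hℓ, he⟩ := HB
            norm_num at he
            have hval : a1 1 (t₀+(n+1)) = true := by
              rw [hstep, ha11 (t₀+n), hm0, hxv, hB]; norm_num [b2z]
            rw [hval]
            simp only [true_iff]
            exact ⟨ℓ, by omega⟩
      · -- third component, a1 of layer j+2
        have hp := hp2 j
        have HB := IH2 j (by omega)
        have HA := (IHad j (by omega)).1
        have HD := (IHad j (by omega)).2
        cases hB : a2 (j+1) (t₀+n) with
        | true =>
          rw [hB] at HB; simp only [true_iff] at HB
          obtain ⟨ℓ, hℓ, hBe⟩ := HB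
          cases hD : d (j+2) (t₀+n) with
          | true =>
            exfalso
            rw [hD] at HD; simp only [true_iff] at HD
            obtain ⟨ℓ', hℓ', hDe⟩ := HD
            have he : ℓ * 2^(j+1) = ℓ' * (2 * 2^(j+1)) + 1 := by linarith
            have h1 : 2^(j+1) ∣ ℓ * 2^(j+1) := dvd_mul_left _ _
            rw [he] at h1
            have h2 : 2^(j+1) ∣ ℓ' * (2 * 2^(j+1)) := ⟨ℓ' * 2, by ring⟩
            have h3 : 2^(j+1) ∣ 1 := (Nat.dvd_add_right h2).mp h1
            have := Nat.le_of_dvd (by norm_num) h3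
            omega
          | false =>
            have hval : a1 (j+2) (t₀+(n+1)) = true := by
              rw [hstep, ha1 (j+2) (t₀+n) (by omega) (by omega),
                show j+2-1 = j+1 from rfl, hm0, hB, hD]
              cases a1 (j+2) (t₀+n) <;> norm_num [b2z]
            rw [hval]
            simp only [true_iff]
            rcases Nat.even_or_odd ℓ with ⟨c, hc⟩ | ⟨c, hc⟩
            · obtain ⟨k, rfl⟩ : ∃ k, c = k + 1 := ⟨c-1, by omega⟩
              subst hc
              exact ⟨k, by linarith, by linarith⟩
            · subst hc
              exact ⟨c, by linarith, by linarith⟩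
        | false =>
          rw [hB] at HB; simp only [Bool.false_eq_true, false_iff] at HB
          cases hA : a1 (j+2) (t₀+n) with
          | true =>
            rw [hA] at HA; simp only [true_iff] at HA
            obtain ⟨k, hk1, hk2⟩ := HA
            cases hD : d (j+2) (t₀+n) with
            | false =>
              rw [hD] at HD; simp only [Bool.false_eq_true, false_iff] at HD
              have hval : a1 (j+2) (t₀+(n+1)) = true := by
                rw [hstep, ha1 (j+2) (t₀+n) (by omega) (by omega),
                  show j+2-1 = j+1 from rfl, hm0, hB, hA, hD]
                norm_num [b2z]
              rw [hval]
              simp only [true_iff]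
              have hne : n ≠ (2*k+2) * 2^(j+1) + (j+1) := by
                intro h
                exact HD ⟨k+1, by omega, by linarith⟩
              have hlt : n < (2*k+2) * 2^(j+1) + (j+1) := lt_of_le_of_ne hk2 hne
              exact ⟨k, by linarith, by linarith⟩
            | true =>
              rw [hD] at HD; simp only [true_iff] at HD
              obtain ⟨ℓ', hℓ', hDe⟩ := HD
              have hval : a1 (j+2) (t₀+(n+1)) = false := by
                rw [hstep, ha1 (j+2) (t₀+n) (by omega) (by omega),
                  show j+2-1 = j+1 from rfl, hm0, hB, hA, hD]
                norm_num [b2z]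
              rw [hval]
              simp only [Bool.false_eq_true, false_iff]
              rintro ⟨k', h1, h2⟩
              have hge : 2*k'+1 ≤ 2*ℓ' := by
                by_contra hcon
                push_neg at hcon
                have hle : 2*ℓ' ≤ 2*k' := by omega
                have := Nat.mul_le_mul_right (2^(j+1)) hle
                linarith
              have hge2 : 2*k'+2 ≤ 2*ℓ' := by omega
              have := Nat.mul_le_mul_right (2^(j+1)) hge2
              linarith
          | false =>
            rw [hA] at HA; simp only [Bool.false_eq_true, false_iff] at HA
            have hval : a1 (j+2) (t₀+(n+1)) = false := by
              rw [hstep, ha1 (j+2) (t₀+n) (by omega) (by omega),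
                show j+2-1 = j+1 from rfl, hm0, hB, hA]
              cases d (j+2) (t₀+n) <;> norm_num [b2z]
            rw [hval]
            simp only [Bool.false_eq_true, false_iff]
            rintro ⟨k, h1, h2⟩
            by_cases hc : n + 1 = (2*k+1) * 2^(j+1) + (j+1)
            · exact HB ⟨2*k+1, by omega, by linarith⟩
            · have h1' : (2*k+1) * 2^(j+1) + (j+1) < n + 1 :=
                lt_of_le_of_ne h1 (fun h => hc h.symm)
              exact HA ⟨k, by linarith, by linarith⟩
      · -- fourth component, d of layer j+2
        have hp := hp2 j
        have HB := IH2 j (by omega)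
        have HA := (IHad j (by omega)).1
        cases hB : a2 (j+1) (t₀+n) with
        | false =>
          rw [hB] at HB
          simp only [Bool.false_eq_true, false_iff] at HB
          have hval : d (j+2) (t₀+(n+1)) = false := by
            rw [hstep, hd (j+2) (t₀+n) (by omega) (by omega),
              show j+2-1 = j+1 from rfl, hB]
            cases a1 (j+2) (t₀+n) <;> norm_num [b2z]
          rw [hval]
          simp only [Bool.false_eq_true, false_iff]
          rintro ⟨ℓ, hℓ, he⟩
          obtain ⟨k, rfl⟩ : ∃ k, ℓ = k + 1 := ⟨ℓ-1, by omega⟩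
          exact HB ⟨2*(k+1), by omega, by linarith⟩
        | true =>
          rw [hB] at HB
          simp only [true_iff] at HB
          obtain ⟨ℓ, hℓ, hBe⟩ := HB
          cases hA : a1 (j+2) (t₀+n) with
          | false =>
            rw [hA] at HA
            simp only [Bool.false_eq_true, false_iff] at HA
            have hval : d (j+2) (t₀+(n+1)) = false := by
              rw [hstep, hd (j+2) (t₀+n) (by omega) (by omega),
                show j+2-1 = j+1 from rfl, hB, hA]
              norm_num [b2z]
            rw [hval]
            simp only [Bool.false_eq_true, false_iff]
            rintro ⟨ℓ', hℓ', he⟩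
            obtain ⟨k, rfl⟩ : ∃ k, ℓ' = k + 1 := ⟨ℓ'-1, by omega⟩
            exact HA ⟨k, by linarith, by linarith⟩
          | true =>
            rw [hA] at HA
            simp only [true_iff] at HA
            obtain ⟨k, hk1, hk2⟩ := HA
            have hs : ℓ = (2*k+1) + 1 :=
              mul_sandwich hp (by linarith) (by linarith)
            have hval : d (j+2) (t₀+(n+1)) = true := by
              rw [hstep, hd (j+2) (t₀+n) (by omega) (by omega),
                show j+2-1 = j+1 from rfl, hB, hA]
              norm_num [b2z]
            rw [hval]
            simp only [true_iff]
            refine ⟨k+1, by omega, by rw [hBe, hs]; ring⟩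
  refine ⟨?_, ?_, ?_⟩
  · intro i ℓ hi him hℓ hdiv
    obtain ⟨j, rfl⟩ : ∃ j, i = j + 1 := ⟨i-1, by omega⟩
    have hmul : ℓ * 2^(j+1) ≤ 2^(M+1) :=
      (Nat.le_div_iff_mul_le (by positivity)).mp hdiv
    have hjM : j ≤ M := by omega
    have hnle : ℓ * 2^(j+1) + j ≤ 2^(M+1) + M := by linarith
    have := ((key (ℓ * 2^(j+1) + j) hnle).1 j (by omega)).mpr ⟨ℓ, hℓ, rfl⟩
    have et : t₀ + ℓ * 2^(j+1) + (j+1) - 1 = t₀ + (ℓ * 2^(j+1) + j) := by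
      generalize ℓ * 2^(j+1) = Q
      omega
    rw [et]
    exact this
  · intro τ hτ
    by_cases hτ0 : τ ≤ t₀
    · exact (hquiet (M+1) τ hτ0).2.1
    · obtain ⟨n, rfl⟩ : ∃ n, τ = t₀ + n := ⟨τ - t₀, by omega⟩
      have hnD : n ≤ 2^(M+1) + M := by
        generalize 2^(M+1) = P at hτ
        omega
      have hlt : n < 2^(M+1) + M := by
        generalize 2^(M+1) = P at hτ
        omega
      cases hval : a2 (M+1) (t₀+n) with
      | false => rfl
      | true =>
        obtain ⟨ℓ, hℓ, heq⟩ := ((key n hnD).1 M (by omega)).mp hval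
        have h1 : 2^(M+1) ≤ ℓ * 2^(M+1) := Nat.le_mul_of_pos_left _ hℓ
        linarith
  · have et : t₀ + 2^(M+1) + (M+1) - 1 = t₀ + (2^(M+1) + M) := by
      generalize 2^(M+1) = P
      omega
    rw [et]
    exact ((key (2^(M+1)+M) le_rfl).1 M (by omega)).mpr ⟨1, le_rfl, by rw [one_mul]⟩
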